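/- arXiv:1001.3223 — 3 statements merged into one kernel-verified Lean document; each statement's English description precedes it below -/
import Mathlib

section
/- For K > 0 and z ∈ ℂ with Im(z) > 1, the Fourier transform of the call payoff f(x) = max(e^x − K, 0) is given by ∫_ℝ e^{izx} f(x) dx = K^{1+iz} / (iz(1+iz)), where K^{1+iz} = e^{(1+iz) log K}. -/
open MeasureTheory

lemma cexp_integrableOn_Ioi (c : ℂ) (hc : c.re < 0) (a : ℝ) :
    IntegrableOn (fun x : ℝ => Complex.exp (c * x)) (Set.Ioi a) := by
  have hb : 0 < -c.re := by linarith
  refine Integrable.mono' (g := fun x => Real.exp (-(-c.re) * x))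
    (exp_neg_integrableOn_Ioi a hb) ?_ ?_
  · exact (Complex.continuous_exp.comp (by fun_prop)).aestronglyMeasurable
  · filter_upwards with x
    rw [Complex.norm_exp]
    simp [Complex.mul_re]

lemma cexp_integral_Ioi (c : ℂ) (hc : c.re < 0) (a : ℝ) :
    ∫ x in Set.Ioi a, Complex.exp (c * x) = -Complex.exp (c * a) / c := by
  have hc0 : c ≠ 0 := fun h => by simp [h] at hc
  have := integral_Ioi_of_hasDerivAt_of_tendsto
    (f := fun x : ℝ => Complex.exp (c * x) / c)
    (f' := fun x : ℝ => Complex.exp (c * x)) (a := a) (m := 0)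
    ?_ ?_ (cexp_integrableOn_Ioi c hc a) ?_
  · rw [this]; ring
  · exact (Continuous.continuousWithinAt (by continuity))
  · intro x _
    have : HasDerivAt (fun x : ℝ => Complex.exp (c * x)) (c * Complex.exp (c * x)) x := by
      have h1 : HasDerivAt (fun x : ℝ => (c * x : ℂ)) c x := by
        simpa using (Complex.ofRealCLM.hasDerivAt (x := x)).const_mul c
      simpa [mul_comm] using h1.cexp
    simpa [mul_comm, mul_div_assoc, mul_div_cancel_left₀ _ hc0] using this.div_const c
  · have : Filter.Tendsto (fun x : ℝ => Complex.exp (c * x)) Filter.atTop (nhds 0) := by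
      rw [tendsto_zero_iff_norm_tendsto_zero]
      have : ∀ x : ℝ, ‖Complex.exp (c * x)‖ = Real.exp (c.re * x) := by
        intro x; rw [Complex.norm_exp]; simp [Complex.mul_re]
      simp only [this]
      exact Real.tendsto_exp_atBot.comp
        (Filter.Tendsto.const_mul_atTop_of_neg hc Filter.tendsto_id)
    simpa using this.div_const c

/-- For `K > 0` and `z ∈ ℂ` with `Im z > 1`, the Fourier transform of the call payoff
`f(x) = (e^x − K)⁺` is `∫ e^{izx} f(x) dx = K^{1+iz}/(iz(1+iz))`. -/
theorem stmt_13 (K : ℝ) (hK : 0 < K) (z : ℂ) (hz : 1 < z.im) :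
    ∫ x : ℝ, Complex.exp (Complex.I * z * x) * (max (Real.exp x - K) 0 : ℝ)
      = (K : ℂ) ^ (1 + Complex.I * z) / (Complex.I * z * (1 + Complex.I * z)) := by
  set a := Real.log K with ha
  have hre1 : (Complex.I * z).re < 0 := by simp; linarith
  have hre2 : (1 + Complex.I * z).re < 0 := by simp; linarith
  have hne1 : Complex.I * z ≠ 0 := fun h => by
    have := congrArg Complex.re h; simp at this; linarith
  have hne2 : (1 + Complex.I * z) ≠ 0 := fun h => by
    have := congrArg Complex.re h; simp at this; linarith
  -- restrict to Ioi a
  have hsupp : ∀ x : ℝ, x ∉ Set.Ioi a →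
      Complex.exp (Complex.I * z * x) * (max (Real.exp x - K) 0 : ℝ) = 0 := by
    intro x hx
    have hx' : x ≤ a := not_lt.1 hx
    have : Real.exp x ≤ K := by
      calc Real.exp x ≤ Real.exp a := Real.exp_le_exp.2 hx'
      _ = K := Real.exp_log hK
    simp [max_eq_right (by linarith : Real.exp x - K ≤ 0)]
  rw [← MeasureTheory.setIntegral_eq_integral_of_forall_compl_eq_zero
    (fun x hx => hsupp x hx)]
  have heq : ∀ x ∈ Set.Ioi a,
      Complex.exp (Complex.I * z * x) * (max (Real.exp x - K) 0 : ℝ)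
        = Complex.exp ((1 + Complex.I * z) * x) - K * Complex.exp (Complex.I * z * x) := by
    intro x hx
    have hx' : K ≤ Real.exp x := by
      rw [← Real.exp_log hK]; exact (Real.exp_le_exp.2 hx.le)
    rw [max_eq_left (by linarith)]
    push_cast
    rw [add_mul, one_mul, Complex.exp_add]
    ring
  rw [MeasureTheory.setIntegral_congr_fun measurableSet_Ioi heq]
  rw [MeasureTheory.integral_sub (cexp_integrableOn_Ioi _ hre2 a)
    ((cexp_integrableOn_Ioi _ hre1 a).const_mul _)]
  rw [integral_const_mul, cexp_integral_Ioi _ hre2, cexp_integral_Ioi _ hre1]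
  have hKpow : ∀ w : ℂ, Complex.exp (w * a) = (K : ℂ) ^ w := by
    intro w
    rw [Complex.cpow_def_of_ne_zero (by exact_mod_cast hK.ne'), ha,
      ← Complex.ofReal_log hK.le, mul_comm]
  rw [hKpow, hKpow]
  have h1 : (K : ℂ) ^ (1 + Complex.I * z) = K * (K : ℂ) ^ (Complex.I * z) := by
    rw [Complex.cpow_add _ _ (by exact_mod_cast hK.ne'), Complex.cpow_one]
  rw [h1]
  have hz0 : z ≠ 0 := right_ne_zero_of_mul hne1
  field_simp
  ring
end

section
/- For K > 0 and z = (z₁, z₂) ∈ ℂ² with Im(z₁) < 0 and Im(z₂) < 0, the Fourier transform of the two-asset basket put payoff f(x₁, x₂) = max(K − e^{x₁} − e^{x₂}, 0) equals ∫_{ℝ²} e^{i⟨z, x⟩} f(x) dx = K^{1 + i(z₁+z₂)} · Γ(iz₁) Γ(iz₂) / Γ(2 + i(z₁+z₂)). -/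
open MeasureTheory

open Complex in
private lemma aux_put (C : ℝ) (w s : ℂ) (hw : 0 < w.re) (hs : 1 < s.re) :
    ∫ x : ℝ, Complex.exp (w * x) * ((max (C - Real.exp x) 0 : ℝ) : ℂ) ^ (s - 1)
      = ((max C 0 : ℝ) : ℂ) ^ (w + s - 1) *
          (Complex.Gamma w * Complex.Gamma s / Complex.Gamma (w + s)) := by
  have hs0 : 0 < s.re := lt_trans one_pos hs
  have hs1 : s - 1 ≠ 0 := by
    intro h
    have : (s - 1).re = 0 := by rw [h]; simp
    simp only [Complex.sub_re, Complex.one_re] at this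
    linarith
  have hws1 : w + s - 1 ≠ 0 := by
    intro h
    have : (w + s - 1).re = 0 := by rw [h]; simp
    simp only [Complex.sub_re, Complex.add_re, Complex.one_re] at this
    linarith
  set g : ℝ → ℂ := fun u => (u : ℂ) ^ (w - 1) * ((max (C - u) 0 : ℝ) : ℂ) ^ (s - 1) with hg
  have hA : (∫ u in Set.Ioi (0:ℝ), g u)
      = ∫ x : ℝ, Complex.exp (w * x) * ((max (C - Real.exp x) 0 : ℝ) : ℂ) ^ (s - 1) := by
    have h := integral_image_eq_integral_abs_deriv_smul MeasurableSet.univ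
      (fun x _ => (Real.hasDerivAt_exp x).hasDerivWithinAt)
      (Real.exp_injective.injOn) g
    rw [Set.image_univ, Real.range_exp] at h
    rw [h, setIntegral_univ]
    congr 1
    funext x
    have hne : Complex.exp (x : ℂ) ≠ 0 := Complex.exp_ne_zero _
    have hcpow : ((Real.exp x : ℝ) : ℂ) ^ (w - 1) = Complex.exp ((w - 1) * x) := by
      rw [Complex.ofReal_exp, Complex.cpow_def_of_ne_zero hne,
        Complex.log_exp (by simp [Real.pi_pos]) (by simp [Real.pi_pos.le])]
      exact congrArg Complex.exp (mul_comm _ _)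
    rw [hg]
    simp only [abs_of_pos (Real.exp_pos x), real_smul]
    rw [hcpow, ← mul_assoc]
    congr 1
    rw [Complex.ofReal_exp, ← Complex.exp_add]
    congr 1
    ring
  rw [← hA]
  rcases le_or_gt C 0 with hC | hC
  · have h0 : ∀ u ∈ Set.Ioi (0:ℝ), g u = 0 := by
      intro u hu
      have : max (C - u) 0 = 0 := max_eq_right (by linarith [Set.mem_Ioi.mp hu])
      rw [hg]
      simp only [this, Complex.ofReal_zero, Complex.zero_cpow hs1, mul_zero]
    rw [setIntegral_congr_fun measurableSet_Ioi h0, integral_zero]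
    have : max C 0 = 0 := max_eq_right hC
    rw [this, Complex.ofReal_zero, Complex.zero_cpow hws1, zero_mul]
  · have hB : ∀ u ∈ Set.Ioi (0:ℝ), g u = (Set.Ioc (0:ℝ) C).indicator g u := by
      intro u hu
      by_cases h : u ≤ C
      · rw [Set.indicator_of_mem (Set.mem_Ioc.mpr ⟨Set.mem_Ioi.mp hu, h⟩)]
      · rw [Set.indicator_of_notMem (fun hm => h hm.2)]
        have : max (C - u) 0 = 0 := max_eq_right (by linarith)
        rw [hg]
        simp only [this, Complex.ofReal_zero, Complex.zero_cpow hs1, mul_zero]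
    rw [setIntegral_congr_fun measurableSet_Ioi hB, setIntegral_indicator measurableSet_Ioc,
      Set.inter_eq_self_of_subset_right Set.Ioc_subset_Ioi_self]
    have hC2 : ∀ u ∈ Set.Ioc (0:ℝ) C, g u = (u : ℂ) ^ (w - 1) * ((C : ℂ) - u) ^ (s - 1) := by
      intro u hu
      have h1 : max (C - u) 0 = C - u := max_eq_left (by linarith [hu.2])
      simp only [hg, h1]
      push_cast
      rfl
    rw [setIntegral_congr_fun measurableSet_Ioc hC2, ← intervalIntegral.integral_of_le hC.le,
      Complex.betaIntegral_scaled w s hC]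
    have hbeta : Complex.betaIntegral w s
        = Complex.Gamma w * Complex.Gamma s / Complex.Gamma (w + s) := by
      have h := Complex.Gamma_mul_Gamma_eq_betaIntegral hw hs0
      have hne : Complex.Gamma (w + s) ≠ 0 :=
        Complex.Gamma_ne_zero_of_re_pos (by simp only [Complex.add_re]; linarith)
      field_simp [h]
      rw [h]; ring
    rw [hbeta, max_eq_left hC.le]

private lemma exp_mul_integrableOn_Iic {a c : ℝ} (ha : 0 < a) :
    IntegrableOn (fun t => Real.exp (a * t)) (Set.Iic c) := by
  have h1 : Integrable ((Set.Iic (a * c)).indicator Real.exp) :=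
    (integrableOn_exp_Iic (a * c)).integrable_indicator measurableSet_Iic
  have h2 := h1.comp_mul_left' (R := a) ha.ne'
  rw [← integrable_indicator_iff measurableSet_Iic]
  apply h2.congr
  filter_upwards with t
  simp only [Set.indicator_apply, Set.mem_Iic, mul_le_mul_iff_right₀ ha]

/-- For `K > 0` and `z = (z₁, z₂) ∈ ℂ²` with `Im z₁ < 0`, `Im z₂ < 0`, the Fourier transform of
the two-asset basket put payoff `f(x₁, x₂) = (K − e^{x₁} − e^{x₂})⁺` is
`K^{1+i(z₁+z₂)} Γ(iz₁) Γ(iz₂) / Γ(2 + i(z₁+z₂))`. -/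
theorem stmt_14 (K : ℝ) (hK : 0 < K) (z₁ z₂ : ℂ) (h₁ : z₁.im < 0) (h₂ : z₂.im < 0) :
    ∫ x : ℝ × ℝ, Complex.exp (Complex.I * (z₁ * x.1 + z₂ * x.2)) *
        (max (K - Real.exp x.1 - Real.exp x.2) 0 : ℝ)
      = (K : ℂ) ^ (1 + Complex.I * (z₁ + z₂)) *
          Complex.Gamma (Complex.I * z₁) * Complex.Gamma (Complex.I * z₂) /
          Complex.Gamma (2 + Complex.I * (z₁ + z₂)) := by
  have hw₁ : 0 < (Complex.I * z₁).re := by simp [Complex.mul_re]; linarith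
  have hw₂ : 0 < (Complex.I * z₂).re := by simp [Complex.mul_re]; linarith
  -- integrability
  set F : ℝ × ℝ → ℂ := fun x => Complex.exp (Complex.I * (z₁ * x.1 + z₂ * x.2)) *
      (max (K - Real.exp x.1 - Real.exp x.2) 0 : ℝ) with hF
  set g₁ : ℝ → ℝ := (Set.Iic (Real.log K)).indicator (fun t => K * Real.exp (-z₁.im * t)) with hg₁
  set g₂ : ℝ → ℝ := (Set.Iic (Real.log K)).indicator (fun t => Real.exp (-z₂.im * t)) with hg₂
  have hG1 : Integrable g₁ := (integrable_indicator_iff measurableSet_Iic).mpr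
    ((exp_mul_integrableOn_Iic (a := -z₁.im) (c := Real.log K) (by linarith)).const_mul K)
  have hG2 : Integrable g₂ := (integrable_indicator_iff measurableSet_Iic).mpr
    (exp_mul_integrableOn_Iic (a := -z₂.im) (c := Real.log K) (by linarith))
  have hGprod : Integrable (fun x : ℝ × ℝ => g₁ x.1 * g₂ x.2) (volume.prod volume) :=
    hG1.mul_prod hG2
  have hFc : Continuous F := by
    apply Continuous.mul
    · exact Complex.continuous_exp.comp (by fun_prop)
    · exact Complex.continuous_ofReal.comp ((by fun_prop : Continuous fun x : ℝ × ℝ =>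
        K - Real.exp x.1 - Real.exp x.2).max continuous_const)
  have hFi : Integrable F (volume.prod volume) := by
    refine hGprod.mono' ?_ ?_
    · rw [← Measure.volume_eq_prod]; exact hFc.aestronglyMeasurable
    · filter_upwards with x
      have hnorm : ‖F x‖ = Real.exp (-z₁.im * x.1 + -z₂.im * x.2) *
          max (K - Real.exp x.1 - Real.exp x.2) 0 := by
        rw [hF]
        simp only [norm_mul, Complex.norm_exp, Complex.norm_real, Real.norm_eq_abs]
        rw [abs_of_nonneg (le_max_right _ _)]
        congr 2
        simp [Complex.mul_re, Complex.add_im, Complex.mul_im, Complex.add_re]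
        ring
      rw [hnorm]
      rcases le_or_gt (K - Real.exp x.1 - Real.exp x.2) 0 with h | h
      · rw [max_eq_right h, mul_zero]
        exact mul_nonneg (Set.indicator_nonneg (fun t _ => by positivity) _)
          (Set.indicator_nonneg (fun t _ => (Real.exp_pos _).le) _)
      · have hx1 : x.1 ≤ Real.log K := by
          have : Real.exp x.1 < K := by nlinarith [Real.exp_pos x.2]
          exact ((Real.lt_log_iff_exp_lt hK).mpr this).le
        have hx2 : x.2 ≤ Real.log K := by
          have : Real.exp x.2 < K := by nlinarith [Real.exp_pos x.1]
          exact ((Real.lt_log_iff_exp_lt hK).mpr this).le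
        rw [hg₁, hg₂, Set.indicator_of_mem (Set.mem_Iic.mpr hx1),
          Set.indicator_of_mem (Set.mem_Iic.mpr hx2), max_eq_left h.le, Real.exp_add]
        have hm : K - Real.exp x.1 - Real.exp x.2 ≤ K := by
          nlinarith [Real.exp_pos x.1, Real.exp_pos x.2]
        have hpos : (0:ℝ) ≤ Real.exp (-z₁.im * x.1) * Real.exp (-z₂.im * x.2) := by positivity
        nlinarith [mul_le_mul_of_nonneg_left hm hpos]
  -- Fubini
  have hsplit : (∫ x : ℝ × ℝ, F x) = ∫ x : ℝ, ∫ y : ℝ, F (x, y) := by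
    rw [Measure.volume_eq_prod, integral_prod _ hFi]
  have inner : ∀ x : ℝ, (∫ y : ℝ, F (x, y))
      = Complex.exp ((Complex.I * z₁) * x) *
          ((((max (K - Real.exp x) 0 : ℝ)) : ℂ) ^ (Complex.I * z₂ + 2 - 1)) *
          (Complex.Gamma (Complex.I * z₂) * Complex.Gamma 2 /
            Complex.Gamma (Complex.I * z₂ + 2)) := by
    intro x
    have step1 : (∫ y : ℝ, F (x, y)) = Complex.exp ((Complex.I * z₁) * x) *
        ∫ y : ℝ, Complex.exp ((Complex.I * z₂) * y) *
          (((max ((K - Real.exp x) - Real.exp y) 0 : ℝ)) : ℂ) ^ ((2 : ℂ) - 1) := by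
      rw [← integral_const_mul]
      congr 1
      funext y
      rw [hF]
      simp only []
      rw [show ((2 : ℂ) - 1) = 1 by norm_num, Complex.cpow_one, ← mul_assoc, ← Complex.exp_add]
      congr 2
      ring
    rw [step1, aux_put (K - Real.exp x) (Complex.I * z₂) 2 hw₂ (by norm_num)]
    ring
  refine Eq.trans hsplit ?_
  calc (∫ x : ℝ, ∫ y : ℝ, F (x, y))
      = (∫ x : ℝ, Complex.exp ((Complex.I * z₁) * x) *
          ((((max (K - Real.exp x) 0 : ℝ)) : ℂ) ^ (Complex.I * z₂ + 2 - 1))) *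
          (Complex.Gamma (Complex.I * z₂) * Complex.Gamma 2 /
            Complex.Gamma (Complex.I * z₂ + 2)) := by
        rw [← integral_mul_const]
        exact integral_congr_ae (Filter.Eventually.of_forall inner)
    _ = (((max K 0 : ℝ)) : ℂ) ^ (Complex.I * z₁ + (Complex.I * z₂ + 2) - 1) *
          (Complex.Gamma (Complex.I * z₁) * Complex.Gamma (Complex.I * z₂ + 2) /
            Complex.Gamma (Complex.I * z₁ + (Complex.I * z₂ + 2))) *
          (Complex.Gamma (Complex.I * z₂) * Complex.Gamma 2 /
            Complex.Gamma (Complex.I * z₂ + 2)) := by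
        rw [aux_put K (Complex.I * z₁) (Complex.I * z₂ + 2) hw₁
          (by simp [Complex.add_re, Complex.mul_re]; linarith)]
    _ = (K : ℂ) ^ (1 + Complex.I * (z₁ + z₂)) *
          Complex.Gamma (Complex.I * z₁) * Complex.Gamma (Complex.I * z₂) /
          Complex.Gamma (2 + Complex.I * (z₁ + z₂)) := by
        have hGne : Complex.Gamma (Complex.I * z₂ + 2) ≠ 0 :=
          Complex.Gamma_ne_zero_of_re_pos (by simp [Complex.add_re, Complex.mul_re]; linarith)
        have hG2one : Complex.Gamma 2 = 1 := by
          rw [show (2 : ℂ) = 1 + 1 by norm_num, Complex.Gamma_add_one _ one_ne_zero,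
            Complex.Gamma_one, mul_one]
        have hexp : Complex.I * z₁ + (Complex.I * z₂ + 2) - 1 = 1 + Complex.I * (z₁ + z₂) := by
          ring
        have harg : Complex.I * z₁ + (Complex.I * z₂ + 2) = 2 + Complex.I * (z₁ + z₂) := by
          ring
        rw [hexp, harg, hG2one, max_eq_left hK.le, mul_one]
        have hstep : Complex.Gamma (Complex.I * z₁) * Complex.Gamma (Complex.I * z₂ + 2) /
              Complex.Gamma (2 + Complex.I * (z₁ + z₂)) *
              (Complex.Gamma (Complex.I * z₂) / Complex.Gamma (Complex.I * z₂ + 2))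
            = Complex.Gamma (Complex.I * z₁) * Complex.Gamma (Complex.I * z₂) /
              Complex.Gamma (2 + Complex.I * (z₁ + z₂)) := by
          rw [div_mul_div_comm,
            show Complex.Gamma (Complex.I * z₁) * Complex.Gamma (Complex.I * z₂ + 2) *
                Complex.Gamma (Complex.I * z₂)
              = Complex.Gamma (Complex.I * z₂ + 2) *
                (Complex.Gamma (Complex.I * z₁) * Complex.Gamma (Complex.I * z₂)) from by ring,
            show Complex.Gamma (2 + Complex.I * (z₁ + z₂)) * Complex.Gamma (Complex.I * z₂ + 2)
              = Complex.Gamma (Complex.I * z₂ + 2) * Complex.Gamma (2 + Complex.I * (z₁ + z₂))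
              from by ring,
            mul_div_mul_left _ _ hGne]
        rw [mul_assoc, hstep]
        ring
end

section
/- Let a₁, a₂ < 0, λ > 0, n > 0, Σ₀¹² ∈ ℝ, Θ₁₂ ∈ ℝ, and define m(T) as the (1,2) entry of 𝐀⁻¹[ e^{AT}(Σ₀ + 𝐀⁻¹(C)) e^{AᵀT} − 𝐀⁻¹(C) − T·C − Σ₀ ] where A = diag(a₁, a₂), C is a symmetric matrix with off-diagonal entry C₁₂ = λ n Θ₁₂, and 𝐀(X) = AX + XAᵀ. Then m(T) = (1/(a₁+a₂)) [ (e^{(a₁+a₂)T} − 1)(Σ₀¹² + λ n Θ₁₂/(a₁+a₂)) − T λ n Θ₁₂ ]. -/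
open Matrix NormedSpace

/-- The (1,2) entry of the continuous part of the covariance swap rate in the 2-dimensional
OU-Wishart model: with `A = diag(a₁, a₂)`, `𝐀(X) = AX + XAᵀ` (invertible, inverse `e.symm`),
`Σ₀` symmetric with `(Σ₀)₁₂ = σ₁₂` and `C` symmetric with `C₁₂ = λnΘ₁₂`, the (1,2) entry of
`𝐀⁻¹[e^{AT}(Σ₀ + 𝐀⁻¹C)e^{AᵀT} − 𝐀⁻¹C − T·C − Σ₀]` equals
`(1/(a₁+a₂))[(e^{(a₁+a₂)T} − 1)(σ₁₂ + λnΘ₁₂/(a₁+a₂)) − TλnΘ₁₂]`. -/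
theorem stmt_19 (a₁ a₂ lam n σ₁₂ Θ₁₂ : ℝ) (h₁ : a₁ < 0) (h₂ : a₂ < 0)
    (hlam : 0 < lam) (hn : 0 < n)
    (S₀ C : Matrix (Fin 2) (Fin 2) ℝ) (hS₀ : S₀.IsSymm) (hC : C.IsSymm)
    (hS₀12 : S₀ 0 1 = σ₁₂) (hC12 : C 0 1 = lam * n * Θ₁₂)
    (e : Matrix (Fin 2) (Fin 2) ℝ ≃ₗ[ℝ] Matrix (Fin 2) (Fin 2) ℝ)
    (he : ∀ X, e X = diagonal ![a₁, a₂] * X + X * (diagonal ![a₁, a₂])ᵀ)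
    (T : ℝ) :
    (e.symm (exp (T • diagonal ![a₁, a₂]) * (S₀ + e.symm C) *
        exp (T • (diagonal ![a₁, a₂])ᵀ) - e.symm C - T • C - S₀)) 0 1
      = (1 / (a₁ + a₂)) * ((Real.exp ((a₁ + a₂) * T) - 1) *
          (σ₁₂ + lam * n * Θ₁₂ / (a₁ + a₂)) - T * (lam * n * Θ₁₂)) := by
  have hs : a₁ + a₂ ≠ 0 := by nlinarith
  have key : ∀ Y : Matrix (Fin 2) (Fin 2) ℝ,
      (e.symm Y) 0 1 = Y 0 1 / (a₁ + a₂) := by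
    intro Y
    have h := he (e.symm Y)
    rw [e.apply_symm_apply] at h
    have h01 : Y 0 1 = (a₁ + a₂) * (e.symm Y) 0 1 := by
      conv_lhs => rw [h]
      simp [Matrix.add_apply, Matrix.diagonal_mul, Matrix.mul_diagonal,
        Matrix.transpose_apply]
      ring
    rw [h01]
    field_simp
  have hexp : ∀ v : Fin 2 → ℝ, exp (T • diagonal v)
      = diagonal (fun i => Real.exp (T * v i)) := by
    intro v
    rw [← Matrix.diagonal_smul, Matrix.exp_diagonal]
    ext i j
    by_cases hij : i = j
    · subst hij
      rw [Matrix.diagonal_apply_eq, Matrix.diagonal_apply_eq, Pi.coe_exp,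
        Pi.smul_apply, smul_eq_mul, ← Real.exp_eq_exp_ℝ]
    · rw [Matrix.diagonal_apply_ne _ hij, Matrix.diagonal_apply_ne _ hij]
  rw [key, Matrix.diagonal_transpose, hexp, Matrix.sub_apply, Matrix.sub_apply,
    Matrix.sub_apply, Matrix.mul_diagonal, Matrix.diagonal_mul, Matrix.add_apply,
    Matrix.smul_apply, key, hS₀12, hC12]
  have : (![a₁, a₂] : Fin 2 → ℝ) 0 = a₁ := rfl
  have h2 : (![a₁, a₂] : Fin 2 → ℝ) 1 = a₂ := rfl
  rw [this, h2]
  have hE : Real.exp (T * a₁) * Real.exp (T * a₂) = Real.exp ((a₁ + a₂) * T) := by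
    rw [← Real.exp_add]; ring_nf
  field_simp
  have hc : Real.exp (T * (a₁ + a₂)) = Real.exp ((a₁ + a₂) * T) := by rw [mul_comm]
  linear_combination (σ₁₂ * (a₁ + a₂) + lam * n * Θ₁₂) * hE - (σ₁₂ * (a₁ + a₂) + lam * n * Θ₁₂) * hc
end
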